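/- Let T be a pruned lexicographically ordered ω₁-tree such that for every α < ω₁ the level T(α) has a <lex-greatest element m_α. Then for all α < β < ω₁ one has m_α < m_β in the tree order, the downward closure B of {m_α : α < ω₁} is a cofinal branch of T with B(α) = m_α for all α, B is the <lex-greatest element of 𝓑(T), and B is a local right end point of T. -/

import Mathlib

noncomputable section

open Cardinal Set

def omega1 : Ordinal := (Cardinal.aleph 1).ord

def omega2 : Ordinal := (Cardinal.aleph 2).ord

/-- The height of an element `t`: the order type of its set of strict predecessors. -/
def htOf {X : Type} (lt : X → X → Prop)
    (wo : ∀ t : X, IsWellOrder {s : X // lt s t} fun a b => lt a.1 b.1) (t : X) : Ordinal :=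
  @Ordinal.type {s : X // lt s t} (fun a b => lt a.1 b.1) (wo t)

/-- A lexicographically ordered (normal) `ω₁`-tree. -/
structure LexOmega1Tree where
  T : Type
  lt : T → T → Prop
  lt_irrefl : ∀ a : T, ¬ lt a a
  lt_trans : ∀ {a b c : T}, lt a b → lt b c → lt a c
  /-- the strict predecessors of any element are well-ordered -/
  predWO : ∀ t : T, IsWellOrder {s : T // lt s t} fun a b => lt a.1 b.1
  /-- every level is countable -/
  level_countable : ∀ α : Ordinal, {t : T | htOf lt predWO t = α}.Countable
  /-- levels are nonempty exactly below `ω₁` -/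
  level_nonempty : ∀ α : Ordinal, (∃ t : T, htOf lt predWO t = α) ↔ α < omega1
  /-- normality: distinct elements of the same limit height have different predecessors -/
  normal : ∀ s t : T, htOf lt predWO s = htOf lt predWO t →
    Order.IsSuccLimit (htOf lt predWO s) → (∀ u : T, lt u s ↔ lt u t) → s = t
  /-- the lexicographic comparison of distinct elements of equal height -/
  lexlt : T → T → Prop
  lexlt_same : ∀ a b : T, lexlt a b → htOf lt predWO a = htOf lt predWO b ∧ a ≠ b
  lexlt_tricho : ∀ a b : T, htOf lt predWO a = htOf lt predWO b → a ≠ b →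
    lexlt a b ∨ lexlt b a
  lexlt_asymm : ∀ a b : T, lexlt a b → ¬ lexlt b a
  lexlt_trans : ∀ {a b c : T}, lexlt a b → lexlt b c → lexlt a c
  /-- coherence: the lexicographic comparison is decided at the splitting level -/
  lexlt_coh : ∀ a b a' b' : T, lexlt a b → lt a a' → lt b b' →
    htOf lt predWO a' = htOf lt predWO b' → lexlt a' b'

namespace LexOmega1Tree

variable (S : LexOmega1Tree)

def ht : S.T → Ordinal := htOf S.lt S.predWO

def le (a b : S.T) : Prop := S.lt a b ∨ a = b

/-- a cofinal branch : a downward closed chain meeting every level -/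
def IsBranch (b : Set S.T) : Prop :=
  (∀ s t : S.T, t ∈ b → S.lt s t → s ∈ b) ∧
  (∀ s t : S.T, s ∈ b → t ∈ b → s = t ∨ S.lt s t ∨ S.lt t s) ∧
  (∀ α : Ordinal, α < omega1 → ∃ t ∈ b, S.ht t = α)

/-- the set `𝓑(T)` of cofinal branches -/
def Branch : Type := {b : Set S.T // S.IsBranch b}

/-- the lexicographic order on branches (and on arbitrary sets of nodes) -/
def blex (A B : Set S.T) : Prop := ∃ a ∈ A, ∃ b ∈ B, S.lexlt a b

/-- the order topology on `(𝓑(T), <lex)`, generated by the open rays -/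
def branchTop : TopologicalSpace S.Branch :=
  TopologicalSpace.generateFrom
    {s : Set S.Branch | ∃ a : S.Branch, s = {x | S.blex a.1 x.1} ∨ s = {x | S.blex x.1 a.1}}

/-- `b` is a local right end point of the downward closed subtree `W` -/
def IsLocalRightEP (W b : Set S.T) : Prop :=
  ∃ t ∈ b, ∀ s ∈ b, S.ht t ≤ S.ht s →
    ∀ u ∈ W, S.ht u = S.ht s → S.le t u → u = s ∨ S.lexlt u s

/-- `b` is a local left end point of the downward closed subtree `W` -/
def IsLocalLeftEP (W b : Set S.T) : Prop :=
  ∃ t ∈ b, ∀ s ∈ b, S.ht t ≤ S.ht s →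
    ∀ u ∈ W, S.ht u = S.ht s → S.le t u → u = s ∨ S.lexlt s u

def IsLocalEP (W b : Set S.T) : Prop := S.IsLocalRightEP W b ∨ S.IsLocalLeftEP W b

end LexOmega1Tree

namespace LexOmega1Tree
variable (S : LexOmega1Tree)

lemma ht_eq_typein {s t : S.T} (h : S.lt s t) :
    S.ht s = @Ordinal.typein {u : S.T // S.lt u t} (fun a b => S.lt a.1 b.1) (S.predWO t) ⟨s, h⟩ := by
  letI := S.predWO t
  letI := S.predWO s
  rw [← Ordinal.type_subrel]
  refine Ordinal.type_eq.2 ⟨⟨⟨fun u => ⟨⟨u.1, S.lt_trans u.2 h⟩, u.2⟩,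
    fun y => ⟨y.1.1, y.2⟩, fun u => rfl, fun y => rfl⟩, Iff.rfl⟩⟩

lemma ht_lt_of_lt {s t : S.T} (h : S.lt s t) : S.ht s < S.ht t := by
  letI := S.predWO t
  rw [S.ht_eq_typein h]
  exact Ordinal.typein_lt_type _ _

lemma exists_pred {t : S.T} {α : Ordinal} (h : α < S.ht t) : ∃ s, S.lt s t ∧ S.ht s = α := by
  letI := S.predWO t
  obtain ⟨a, ha⟩ := Ordinal.typein_surj (fun a b : {u : S.T // S.lt u t} => S.lt a.1 b.1) h
  exact ⟨a.1, a.2, by rw [S.ht_eq_typein a.2]; exact ha⟩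

lemma pred_tricho {s s' t : S.T} (h : S.lt s t) (h' : S.lt s' t) :
    s = s' ∨ S.lt s s' ∨ S.lt s' s := by
  letI := S.predWO t
  rcases trichotomous_of (fun a b : {u : S.T // S.lt u t} => S.lt a.1 b.1) ⟨s, h⟩ ⟨s', h'⟩ with
    hh | hh | hh
  · exact Or.inr (Or.inl hh)
  · exact Or.inl (congrArg Subtype.val hh)
  · exact Or.inr (Or.inr hh)

lemma pred_unique {s s' t : S.T} (h : S.lt s t) (h' : S.lt s' t) (he : S.ht s = S.ht s') :
    s = s' := by
  rcases S.pred_tricho h h' with hh | hh | hh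
  · exact hh
  · exact absurd he (ne_of_lt (S.ht_lt_of_lt hh))
  · exact absurd he.symm (ne_of_lt (S.ht_lt_of_lt hh))

lemma ht_lt_omega1 (t : S.T) : S.ht t < omega1 := (S.level_nonempty (S.ht t)).1 ⟨t, rfl⟩

end LexOmega1Tree

/-- If `T` is a pruned lexicographically ordered `ω₁`-tree whose every level
`T(α)` (for `α < ω₁`) has a `<lex`-greatest element `m α`, then the `m α` form a chain in
the tree order, their downward closure `B` is a cofinal branch with `B(α) = m α`,
`B` is the `<lex`-greatest element of `𝓑(T)`, and `B` is a local right end point of `T`. -/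
theorem stmt5 (S : LexOmega1Tree)
    (hpruned : ∀ t : S.T, ∀ α : Ordinal, S.ht t ≤ α → α < omega1 →
      ∃ s : S.T, S.le t s ∧ S.ht s = α)
    (m : Ordinal → S.T)
    (hm_ht : ∀ α : Ordinal, α < omega1 → S.ht (m α) = α)
    (hm_max : ∀ α : Ordinal, α < omega1 → ∀ u : S.T, S.ht u = α →
      u = m α ∨ S.lexlt u (m α)) :
    (∀ α β : Ordinal, α < β → β < omega1 → S.lt (m α) (m β)) ∧
    S.IsBranch {t : S.T | ∃ α : Ordinal, α < omega1 ∧ S.le t (m α)} ∧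
    (∀ α : Ordinal, α < omega1 →
      ∀ t ∈ {t : S.T | ∃ α' : Ordinal, α' < omega1 ∧ S.le t (m α')},
        S.ht t = α → t = m α) ∧
    (∀ b : Set S.T, S.IsBranch b →
      b ≠ {t : S.T | ∃ α : Ordinal, α < omega1 ∧ S.le t (m α)} →
      S.blex b {t : S.T | ∃ α : Ordinal, α < omega1 ∧ S.le t (m α)}) ∧
    S.IsLocalRightEP Set.univ {t : S.T | ∃ α : Ordinal, α < omega1 ∧ S.le t (m α)} := by
  set B : Set S.T := {t : S.T | ∃ α : Ordinal, α < omega1 ∧ S.le t (m α)} with hBdef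
  -- part 1 : the m's form a chain
  have h1 : ∀ α β : Ordinal, α < β → β < omega1 → S.lt (m α) (m β) := by
    intro α β hαβ hβ
    have hα : α < omega1 := hαβ.trans hβ
    obtain ⟨s, hslt, hsht⟩ := S.exists_pred (show α < S.ht (m β) by rw [hm_ht β hβ]; exact hαβ)
    rcases hm_max α hα s hsht with rfl | hlex
    · exact hslt
    · exfalso
      obtain ⟨s', hs'le, hs'ht⟩ := hpruned (m α) β (by rw [hm_ht α hα]; exact hαβ.le) hβ
      have hlt' : S.lt (m α) s' := by
        rcases hs'le with h | h
        · exact h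
        · exfalso; rw [← h, hm_ht α hα] at hs'ht; exact (ne_of_lt hαβ) hs'ht
      have hcoh : S.lexlt (m β) s' :=
        S.lexlt_coh s (m α) (m β) s' hlex hslt hlt'
          (by show S.ht (m β) = S.ht s'; rw [hm_ht β hβ, hs'ht])
      rcases hm_max β hβ s' hs'ht with rfl | h
      · exact (S.lexlt_same _ _ hcoh).2 rfl
      · exact S.lexlt_asymm _ _ hcoh h
  -- auxiliary : le up the chain
  have hle_m : ∀ (t : S.T) (α β : Ordinal), α ≤ β → β < omega1 → S.le t (m α) → S.le t (m β) := by
    intro t α β hαβ hβ ht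
    rcases eq_or_lt_of_le hαβ with rfl | h
    · exact ht
    · rcases ht with h' | h'
      · exact Or.inl (S.lt_trans h' (h1 α β h hβ))
      · exact Or.inl (h' ▸ h1 α β h hβ)
  -- part 2 : B is a branch
  have h2 : S.IsBranch B := by
    refine ⟨?_, ?_, ?_⟩
    · rintro s t ⟨γ, hγ, hle⟩ hst
      refine ⟨γ, hγ, Or.inl ?_⟩
      rcases hle with h | h
      · exact S.lt_trans hst h
      · exact h ▸ hst
    · rintro s t ⟨γ, hγ, hs⟩ ⟨δ, hδ, ht⟩
      have hmax : ∃ ε, ε < omega1 ∧ S.le s (m ε) ∧ S.le t (m ε) := by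
        rcases le_total γ δ with h | h
        · exact ⟨δ, hδ, hle_m s γ δ h hδ hs, ht⟩
        · exact ⟨γ, hγ, hs, hle_m t δ γ h hγ ht⟩
      obtain ⟨ε, hε, hs', ht'⟩ := hmax
      rcases hs' with h | h <;> rcases ht' with h' | h'
      · exact S.pred_tricho h h'
      · exact Or.inr (Or.inl (h' ▸ h))
      · exact Or.inr (Or.inr (h ▸ h'))
      · exact Or.inl (h.trans h'.symm)
    · intro α hα
      exact ⟨m α, ⟨α, hα, Or.inr rfl⟩, hm_ht α hα⟩
  -- part 3 : B(α) = m α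
  have h3 : ∀ α : Ordinal, α < omega1 → ∀ t ∈ B, S.ht t = α → t = m α := by
    rintro α hα t ⟨γ, hγ, hle⟩ hht
    rcases hle with h | h
    · have hαγ : α < γ := by
        have := S.ht_lt_of_lt h
        rwa [hht, hm_ht γ hγ] at this
      exact S.pred_unique h (h1 α γ hαγ hγ) (by rw [hht, hm_ht α hα])
    · subst h
      rw [hm_ht γ hγ] at hht
      subst hht
      rfl
  -- part 4 : B is the lex-greatest branch
  have h4 : ∀ b : Set S.T, S.IsBranch b → b ≠ B → S.blex b B := by
    intro b hb hne
    obtain ⟨hdown, _, hlevels⟩ := hb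
    by_cases hall : ∀ t ∈ b, t = m (S.ht t)
    · exfalso
      apply hne
      ext t
      constructor
      · intro htb
        exact ⟨S.ht t, S.ht_lt_omega1 t, Or.inr (hall t htb)⟩
      · rintro ⟨γ, hγ, hle⟩
        obtain ⟨u, hub, huht⟩ := hlevels γ hγ
        have hu : u = m γ := by rw [hall u hub, huht]
        rcases hle with h | h
        · exact hdown t u hub (hu ▸ h)
        · exact (h.trans hu.symm) ▸ hub
    · push_neg at hall
      obtain ⟨t, htb, htne⟩ := hall
      have hα : S.ht t < omega1 := S.ht_lt_omega1 t
      rcases hm_max (S.ht t) hα t rfl with h | h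
      · exact absurd h htne
      · exact ⟨t, htb, m (S.ht t), ⟨S.ht t, hα, Or.inr rfl⟩, h⟩
  -- part 5 : B is a local right end point
  have h0 : (0 : Ordinal) < omega1 := by
    rw [omega1, Cardinal.lt_ord]
    simpa using aleph_pos 1
  refine ⟨h1, h2, h3, h4, m 0, ⟨0, h0, Or.inr rfl⟩, ?_⟩
  intro s hs _ u _ hht _
  have hs' : s = m (S.ht s) := h3 (S.ht s) (S.ht_lt_omega1 s) s hs rfl
  rw [hs']
  rcases hm_max (S.ht s) (S.ht_lt_omega1 s) u hht with h | h
  · exact Or.inl h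
  · exact Or.inr h
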